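/- Consider the stochastic discrete-time system with measurable safe set X ⊆ ℝⁿ. For N ∈ ℕ and x ∈ ℝⁿ define the finite-time safety value S_N(x) = P^∞({π : φ_π^{x}(k) ∈ X for all k ∈ {0,1,…,N}}). Then S_0(x) = 1_X(x) for every x ∈ ℝⁿ, and for every N ∈ ℕ and every x ∈ ℝⁿ the dynamic-programming recursion S_{N+1}(x) = 1_X(x) · ∫_Θ S_N(f(x,θ)) dP(θ) holds. -/

import Mathlib

open MeasureTheory ProbabilityTheory

open Set

section Aux

variable {Θ : Type*} [MeasurableSpace Θ] {P : Measure Θ} [IsProbabilityMeasure P]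
  {Pinf : Measure (ℕ → Θ)} [IsProbabilityMeasure Pinf]

lemma measurable_shift : Measurable (fun π : ℕ → Θ => fun i => π (i + 1)) :=
  measurable_pi_lambda _ fun i => measurable_pi_apply (i + 1)

omit [IsProbabilityMeasure P] [IsProbabilityMeasure Pinf] in
lemma iid_cylinder
    (h_indep : iIndepFun (fun i (π : ℕ → Θ) => π i) Pinf)
    (h_law : ∀ i : ℕ, Pinf.map (fun π : ℕ → Θ => π i) = P)
    (s : Finset ℕ) (t : ℕ → Set Θ) (ht : ∀ i, MeasurableSet (t i)) :
    Pinf (⋂ i ∈ s, (fun π : ℕ → Θ => π i) ⁻¹' t i) = ∏ i ∈ s, P (t i) := by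
  rw [h_indep.measure_inter_preimage_eq_mul s (fun i _ => ht i)]
  exact Finset.prod_congr rfl fun i _ => by
    rw [← h_law i, Measure.map_apply (measurable_pi_apply i) (ht i)]

lemma shift_invariant
    (h_indep : iIndepFun (fun i (π : ℕ → Θ) => π i) Pinf)
    (h_law : ∀ i : ℕ, Pinf.map (fun π : ℕ → Θ => π i) = P) :
    Pinf.map (fun π : ℕ → Θ => fun i => π (i + 1)) = Pinf := by
  have hshift : Measurable (fun π : ℕ → Θ => fun i => π (i + 1)) := measurable_shift
  have : IsProbabilityMeasure (Pinf.map (fun π : ℕ → Θ => fun i => π (i + 1))) :=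
    Measure.isProbabilityMeasure_map hshift.aemeasurable
  refine ext_of_generate_finite
    (squareCylinders fun _ : ℕ => {s : Set Θ | MeasurableSet s})
    generateFrom_squareCylinders.symm
    (isPiSystem_squareCylinders (fun _ => MeasurableSpace.isPiSystem_measurableSet)
      (fun _ => MeasurableSet.univ))
    ?_ (by simp)
  rintro S ⟨s, t, ht, rfl⟩
  have ht' : ∀ i, MeasurableSet (t i) := fun i => ht i (mem_univ i)
  have hpi : ((s : Set ℕ).pi t) = ⋂ i ∈ s, (fun π : ℕ → Θ => π i) ⁻¹' t i := by
    rw [Set.pi_def]; simp [Function.eval]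
  rw [hpi]
  have hmeas : MeasurableSet (⋂ i ∈ s, (fun π : ℕ → Θ => π i) ⁻¹' t i) :=
    MeasurableSet.biInter (Finset.countable_toSet s)
      (fun i _ => measurable_pi_apply i (ht' i))
  rw [Measure.map_apply hshift hmeas, iid_cylinder h_indep h_law s t ht']
  classical
  let e : ℕ ↪ ℕ := ⟨fun i => i + 1, fun a b h => by simpa using h⟩
  have hpre : (fun π : ℕ → Θ => fun i => π (i + 1)) ⁻¹' (⋂ i ∈ s, (fun π : ℕ → Θ => π i) ⁻¹' t i)
      = ⋂ j ∈ s.map e, (fun π : ℕ → Θ => π j) ⁻¹' t (j - 1) := by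
    ext π
    simp only [mem_preimage, mem_iInter, Finset.mem_map, Function.Embedding.coeFn_mk, e]
    constructor
    · rintro h j ⟨i, hi, rfl⟩
      show π (i + 1) ∈ t (i + 1 - 1)
      simpa using h i hi
    · intro h i hi
      simpa using h (i + 1) ⟨i, hi, rfl⟩
  rw [hpre, iid_cylinder h_indep h_law (s.map e) (fun j => t (j - 1)) (fun j => ht' _),
    Finset.prod_map]
  simp [e]
  exact Finset.prod_congr rfl fun i _ => by show P (t (i + 1 - 1)) = P (t i); simp

omit [IsProbabilityMeasure P] [IsProbabilityMeasure Pinf] in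
lemma indep_head_shift
    (h_indep : iIndepFun (fun i (π : ℕ → Θ) => π i) Pinf) :
    IndepFun (fun π : ℕ → Θ => π 0) (fun π : ℕ → Θ => fun i => π (i + 1)) Pinf := by
  have h := indep_biSup_compl
    (fun i => (measurable_pi_apply (X := fun _ : ℕ => Θ) i).comap_le)
    ((iIndepFun_iff_iIndep _ _ _).1 h_indep) {0}
  rw [IndepFun_iff_Indep]
  set m' : MeasurableSpace (ℕ → Θ) :=
    ⨆ j ∈ ({0}ᶜ : Set ℕ), MeasurableSpace.comap (fun π : ℕ → Θ => π j) ‹_› with hm'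
  have hmble : @Measurable (ℕ → Θ) (ℕ → Θ) m' MeasurableSpace.pi (fun π : ℕ → Θ => fun i => π (i + 1)) := by
    refine measurable_pi_iff.2 fun i => Measurable.of_comap_le ?_
    exact le_iSup₂ (f := fun (j : ℕ) (_ : j ∈ ({0}ᶜ : Set ℕ)) =>
      MeasurableSpace.comap (fun π : ℕ → Θ => π j) ‹_›) (i + 1) (by simp)
  refine indep_of_indep_of_le_left (indep_of_indep_of_le_right h hmble.comap_le) ?_
  exact le_iSup₂ (f := fun (j : ℕ) (_ : j ∈ ({0} : Set ℕ)) =>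
      MeasurableSpace.comap (fun π : ℕ → Θ => π j) ‹_›) 0 rfl

end Aux

/-- Trajectory of the stochastic discrete-time system `x(l+1) = f(x(l), θ(l))`. -/
def traj {n : ℕ} {Θ : Type*} (f : (Fin n → ℝ) → Θ → (Fin n → ℝ))
    (x₀ : Fin n → ℝ) (π : ℕ → Θ) : ℕ → (Fin n → ℝ)
  | 0 => x₀
  | k + 1 => f (traj f x₀ π k) (π k)

/-- Dynamic-programming recursion for the finite-time safety value
`S_N(x) = P^∞({π : φ_π^x(k) ∈ X for all k ∈ {0,…,N}})`:
`S_0 = 1_X` and `S_{N+1}(x) = 1_X(x) · ∫_Θ S_N(f(x,θ)) dP(θ)`. -/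
theorem finite_time_safety_dynamic_programming
    {n : ℕ} {Θ : Type*} [MeasurableSpace Θ]
    (P : Measure Θ) [IsProbabilityMeasure P]
    -- `Pinf` is the i.i.d. product measure `P^∞` on disturbance signals:
    (Pinf : Measure (ℕ → Θ)) [IsProbabilityMeasure Pinf]
    (h_indep : iIndepFun (fun i (π : ℕ → Θ) => π i) Pinf)
    (h_law : ∀ i : ℕ, Pinf.map (fun π : ℕ → Θ => π i) = P)
    (f : (Fin n → ℝ) → Θ → (Fin n → ℝ))
    (hf : Measurable (fun p : (Fin n → ℝ) × Θ => f p.1 p.2))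
    (X : Set (Fin n → ℝ)) (hX : MeasurableSet X) :
    (∀ x : Fin n → ℝ,
        (Pinf {π : ℕ → Θ | ∀ k ≤ 0, traj f x π k ∈ X}).toReal
          = X.indicator (fun _ => (1 : ℝ)) x)
      ∧ (∀ (N : ℕ) (x : Fin n → ℝ),
        (Pinf {π : ℕ → Θ | ∀ k ≤ N + 1, traj f x π k ∈ X}).toReal
          = X.indicator (fun _ => (1 : ℝ)) x
              * ∫ θ, (Pinf {π : ℕ → Θ | ∀ k ≤ N, traj f (f x θ) π k ∈ X}).toReal ∂P) := by
  have hm1 : ∀ k, Measurable (fun p : (Fin n → ℝ) × (ℕ → Θ) => traj f p.1 p.2 k) := by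
    intro k
    induction k with
    | zero => exact measurable_fst
    | succ k ih =>
        exact hf.comp (ih.prodMk ((measurable_pi_apply k).comp measurable_snd))
  constructor
  · intro x
    have hset : {π : ℕ → Θ | ∀ k ≤ 0, traj f x π k ∈ X} = {π : ℕ → Θ | x ∈ X} := by
      ext π
      constructor
      · exact fun h => h 0 le_rfl
      · intro hx k hk
        obtain rfl := Nat.le_zero.mp hk
        exact hx
    rw [hset]
    by_cases hx : x ∈ X <;> simp [hx]
  · intro N x
    have hstep : ∀ (k : ℕ) (y : Fin n → ℝ) (π : ℕ → Θ),
        traj f y π (k + 1) = traj f (f y (π 0)) (fun i => π (i + 1)) k := by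
      intro k
      induction k with
      | zero => intro y π; rfl
      | succ k ih =>
          intro y π
          show f (traj f y π (k + 1)) (π (k + 1)) = _
          rw [ih y π]
          rfl
    set B : Set (Θ × (ℕ → Θ)) :=
      {q : Θ × (ℕ → Θ) | ∀ k ≤ N, traj f (f x q.1) q.2 k ∈ X} with hBdef
    have hB : MeasurableSet B := by
      have : B = ⋂ k ∈ {k : ℕ | k ≤ N},
          (fun q : Θ × (ℕ → Θ) => traj f (f x q.1) q.2 k) ⁻¹' X := by
        ext q; simp [hBdef]
      rw [this]
      refine MeasurableSet.biInter (to_countable _) fun k _ => ?_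
      exact ((hm1 k).comp
        ((hf.comp (measurable_const.prodMk measurable_fst)).prodMk measurable_snd)) hX
    have hsetEq : {π : ℕ → Θ | ∀ k ≤ N + 1, traj f x π k ∈ X}
        = {π : ℕ → Θ | x ∈ X} ∩ (fun π : ℕ → Θ => (π 0, fun i => π (i + 1))) ⁻¹' B := by
      ext π
      simp only [mem_setOf_eq, mem_inter_iff, mem_preimage, hBdef]
      constructor
      · intro h
        refine ⟨h 0 (Nat.zero_le _), fun k hk => ?_⟩
        rw [← hstep]
        exact h (k + 1) (by omega)
      · rintro ⟨hx, h⟩ k hk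
        cases k with
        | zero => exact hx
        | succ k => rw [hstep]; exact h k (by omega)
    have hg : Measurable (fun π : ℕ → Θ => (π 0, fun i => π (i + 1))) :=
      (measurable_pi_apply 0).prodMk measurable_shift
    by_cases hx : x ∈ X
    · have h1 : {π : ℕ → Θ | x ∈ X} = univ := by simp [hx]
      rw [hsetEq, h1, univ_inter, ← Measure.map_apply hg hB]
      have hmap : Pinf.map (fun π : ℕ → Θ => (π 0, fun i => π (i + 1))) = P.prod Pinf := by
        rw [(indepFun_iff_map_prod_eq_prod_map_map (measurable_pi_apply 0).aemeasurable
            measurable_shift.aemeasurable).1 (indep_head_shift h_indep),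
          h_law 0, shift_invariant h_indep h_law]
      rw [hmap, Measure.prod_apply hB, Set.indicator_of_mem hx, one_mul]
      have hmeasθ : Measurable (fun θ => Pinf (Prod.mk θ ⁻¹' B)) :=
        measurable_measure_prodMk_left hB
      exact (integral_toReal hmeasθ.aemeasurable
        (Filter.Eventually.of_forall fun θ => measure_lt_top _ _)).symm
    · have h1 : {π : ℕ → Θ | x ∈ X} = (∅ : Set (ℕ → Θ)) := by simp [hx]
      rw [hsetEq, h1, empty_inter, Set.indicator_of_notMem hx]
      simp
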